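/- Let I be a good ideal in K[x_1,…,x_n]. Then for every nonnegative integer t, I_{t+1,0,…,0} = (I_{t,0,…,0}·I) : ⟨μ_1⟩. -/

import Mathlib

open MvPolynomial

namespace GasanovaRR

/-- The monomial `x^α` in `K[x_1,…,x_n]`. -/
noncomputable def mono (K : Type*) [Field K] {n : ℕ} (α : Fin n → ℕ) :
    MvPolynomial (Fin n) K :=
  MvPolynomial.monomial (Finsupp.equivFunOnFinite.symm α) 1

/-- `I` is a monomial ideal: it is generated by a set of monomials. -/
def IsMonomialIdeal {K : Type*} [Field K] {n : ℕ}
    (I : Ideal (MvPolynomial (Fin n) K)) : Prop :=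
  ∃ A : Set (Fin n → ℕ), I = Ideal.span (mono K '' A)

/-- `x^α` is a minimal monomial generator of `I`, i.e. `x^α ∈ G(I)`:
`x^α ∈ I` and no monomial in `I` strictly divides it. -/
def IsMinGen {K : Type*} [Field K] {n : ℕ}
    (I : Ideal (MvPolynomial (Fin n) K)) (α : Fin n → ℕ) : Prop :=
  mono K α ∈ I ∧ ∀ β : Fin n → ℕ, mono K β ∈ I → β ≤ α → β = α

/-- The point `α` lies in the box `B_{a_1,…,a_n}` (for box sizes `d_1,…,d_n`). -/
def InBox {n : ℕ} (d a α : Fin n → ℕ) : Prop :=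
  ∀ i, a i * d i ≤ α i ∧ α i ≤ (a i + 1) * d i

/-- `I` is a good ideal (w.r.t. box sizes `d`): for every `l ≥ 1`, every minimal
generator of `I^l` lies in a box whose coordinate sum is `l - 1`. -/
def IsGood {K : Type*} [Field K] {n : ℕ}
    (I : Ideal (MvPolynomial (Fin n) K)) (d : Fin n → ℕ) : Prop :=
  ∀ l : ℕ, 1 ≤ l → ∀ α : Fin n → ℕ, IsMinGen (I ^ l) α →
    ∃ a : Fin n → ℕ, InBox d a α ∧ ∑ i, a i = l - 1

/-- `I` is an `𝔪`-primary monomial ideal whose minimal generating set contains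
`μ_i = x_i^{d_i}` with `d_i > 0` for each `i`. -/
def MPrimaryWithCorners {K : Type*} [Field K] {n : ℕ}
    (I : Ideal (MvPolynomial (Fin n) K)) (d : Fin n → ℕ) : Prop :=
  IsMonomialIdeal I ∧ I ≠ ⊤ ∧ (∀ i, 0 < d i) ∧ ∀ i, IsMinGen I (Pi.single i (d i))

/-- The ideal `I_{a_1,…,a_n}` associated to the box `B_{a_1,…,a_n}`, generated by
`m / (μ_1^{a_1}⋯μ_n^{a_n})` for `m ∈ B_{a_1,…,a_n} ∩ G(I^l)`, `l = a_1+⋯+a_n+1`. -/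
noncomputable def boxIdeal {K : Type*} [Field K] {n : ℕ}
    (I : Ideal (MvPolynomial (Fin n) K)) (d a : Fin n → ℕ) :
    Ideal (MvPolynomial (Fin n) K) :=
  Ideal.span ((fun α => mono K (α - fun i => a i * d i)) ''
    {α | InBox d a α ∧ IsMinGen (I ^ (∑ i, a i + 1)) α})

/-- The Ratliff–Rush closure `Ĩ = ⋃_{k ≥ 0} (I^{k+1} : I^k)`. -/
noncomputable def ratliffRush {K : Type*} [Field K] {n : ℕ}
    (I : Ideal (MvPolynomial (Fin n) K)) : Ideal (MvPolynomial (Fin n) K) :=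
  ⨆ k : ℕ, (I ^ (k + 1)).colon ((↑(I ^ k : Ideal (MvPolynomial (Fin n) K))) : Set (MvPolynomial (Fin n) K))

/-- The cone in `ℕ^n` with set `S` of fixed coordinates and vertex `v`. -/
def Cone {n : ℕ} (S : Set (Fin n)) (v : Fin n → ℕ) : Set (Fin n → ℕ) :=
  {b | (∀ i ∈ S, b i = v i) ∧ ∀ i ∉ S, v i ≤ b i}

/-- `I` is a very good ideal: it is good and `I_{a_1,…,a_n} = I` for all boxes. -/
def IsVeryGood {K : Type*} [Field K] {n : ℕ}
    (I : Ideal (MvPolynomial (Fin n) K)) (d : Fin n → ℕ) : Prop :=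
  IsGood I d ∧ ∀ a : Fin n → ℕ, boxIdeal I d a = I


section Infra
variable {K : Type*} [Field K] {n : ℕ}

lemma toF_add (a b : Fin n → ℕ) :
    Finsupp.equivFunOnFinite.symm (a + b) =
      Finsupp.equivFunOnFinite.symm a + Finsupp.equivFunOnFinite.symm b :=
  Finsupp.ext fun _ => rfl

lemma toF_smul (N : ℕ) (a : Fin n → ℕ) :
    Finsupp.equivFunOnFinite.symm (N • a) = N • Finsupp.equivFunOnFinite.symm a :=
  Finsupp.ext fun _ => rfl

lemma mono_mul (a b : Fin n → ℕ) : mono K a * mono K b = mono K (a + b) := by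
  simp [mono, monomial_mul, toF_add]

lemma mono_pow (a : Fin n → ℕ) (N : ℕ) : mono K a ^ N = mono K (N • a) := by
  rw [mono, mono, monomial_pow, one_pow, toF_smul]

lemma mono_zero : mono K (0 : Fin n → ℕ) = 1 := by
  have h : (Finsupp.equivFunOnFinite.symm (0 : Fin n → ℕ)) = 0 := Finsupp.ext fun _ => rfl
  rw [mono, h, monomial_zero', C_1]

lemma support_mono (a : Fin n → ℕ) :
    (mono K a).support = {Finsupp.equivFunOnFinite.symm a} := by
  classical
  rw [mono, support_monomial, if_neg one_ne_zero]

lemma mono_mem_of_le {J : Ideal (MvPolynomial (Fin n) K)} {b a : Fin n → ℕ}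
    (hb : mono K b ∈ J) (h : ∀ i, b i ≤ a i) : mono K a ∈ J := by
  have hab : mono K a = mono K b * mono K (a - b) := by
    rw [mono_mul]
    congr 1
    funext i
    exact (Nat.add_sub_cancel' (h i)).symm
  rw [hab]
  exact Ideal.mul_mem_right _ _ hb

lemma prod_mono_mem_pow {J : Ideal (MvPolynomial (Fin n) K)} :
    ∀ {l : ℕ} (γ : Fin l → Fin n → ℕ), (∀ k, mono K (γ k) ∈ J) →
      mono K (∑ k, γ k) ∈ J ^ l := by
  intro l
  induction l with
  | zero => intro γ _; simp [mono_zero]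
  | succ l ih =>
      intro γ hγ
      have hsp : (∑ k, γ k) = (∑ k : Fin l, γ k.castSucc) + γ (Fin.last l) := by
        rw [Fin.sum_univ_castSucc]
      rw [hsp, ← mono_mul, pow_succ]
      exact Ideal.mul_mem_mul (ih _ fun k => hγ _) (hγ _)

lemma mem_span_mono_support {S : Set (Fin n → ℕ)} {q : MvPolynomial (Fin n) K}
    (hq : q ∈ Ideal.span (mono K '' S)) :
    ∀ σ ∈ q.support, ∃ b ∈ S, ∀ i, b i ≤ σ i := by
  classical
  refine Submodule.span_induction ?_ ?_ ?_ ?_ hq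
  · rintro x ⟨b, hb, rfl⟩ σ hσ
    rw [support_mono] at hσ
    rcases Finset.mem_singleton.1 hσ with rfl
    exact ⟨b, hb, fun i => le_refl _⟩
  · intro σ hσ; simp at hσ
  · intro x y hx hy ihx ihy σ hσ
    rcases Finset.mem_union.1 (MvPolynomial.support_add hσ) with h | h
    exacts [ihx σ h, ihy σ h]
  · intro r x hx ihx σ hσ
    have h2 : σ ∈ (r * x).support := by simpa [smul_eq_mul] using hσ
    rcases Finset.mem_add.1 (MvPolynomial.support_mul r x h2) with ⟨σ₁, hσ₁, σ₂, hσ₂, rfl⟩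
    obtain ⟨b, hb, hle⟩ := ihx σ₂ hσ₂
    exact ⟨b, hb, fun i => le_trans (hle i) (by simp)⟩

lemma span_mono_mul (S T : Set (Fin n → ℕ)) :
    Ideal.span (mono K '' S) * Ideal.span (mono K '' T)
      = Ideal.span (mono K '' Set.image2 (· + ·) S T) := by
  rw [Ideal.span_mul_span']
  congr 1
  ext x
  constructor
  · rintro ⟨_, ⟨s, hs, rfl⟩, _, ⟨t, ht, rfl⟩, rfl⟩
    exact ⟨s + t, ⟨s, hs, t, ht, rfl⟩, (mono_mul s t).symm⟩
  · rintro ⟨_, ⟨s, hs, t, ht, rfl⟩, rfl⟩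
    exact ⟨mono K s, ⟨s, hs, rfl⟩, mono K t, ⟨t, ht, rfl⟩, mono_mul s t⟩

def sumSet {n : ℕ} (A : Set (Fin n → ℕ)) (l : ℕ) : Set (Fin n → ℕ) :=
  {u | ∃ f : Fin l → Fin n → ℕ, (∀ k, f k ∈ A) ∧ u = ∑ k, f k}

lemma sumSet_zero (A : Set (Fin n → ℕ)) : sumSet A 0 = {0} := by
  ext u
  constructor
  · rintro ⟨f, -, rfl⟩
    simp
  · rintro rfl
    exact ⟨Fin.elim0, fun k => k.elim0, by simp⟩

lemma sumSet_succ (A : Set (Fin n → ℕ)) (l : ℕ) :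
    Set.image2 (· + ·) (sumSet A l) A = sumSet A (l + 1) := by
  ext u
  simp only [Set.mem_image2, sumSet, Set.mem_setOf_eq]
  constructor
  · rintro ⟨s, ⟨f, hf, rfl⟩, a, ha, rfl⟩
    refine ⟨Fin.snoc f a, fun k => ?_, ?_⟩
    · refine Fin.lastCases ?_ (fun k => ?_) k
      · simpa using ha
      · simpa using hf k
    · rw [Fin.sum_univ_castSucc]
      simp
  · rintro ⟨f, hf, rfl⟩
    exact ⟨∑ k : Fin l, f (Fin.castSucc k),
      ⟨fun k => f (Fin.castSucc k), fun k => hf _, rfl⟩,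
      f (Fin.last l), hf _, (Fin.sum_univ_castSucc f).symm⟩

lemma pow_span_mono (A : Set (Fin n → ℕ)) (l : ℕ) :
    Ideal.span (mono K '' A) ^ l = Ideal.span (mono K '' sumSet A l) := by
  induction l with
  | zero =>
      rw [pow_zero, sumSet_zero, Set.image_singleton, mono_zero]
      simp
  | succ l ih =>
      rw [pow_succ, ih, span_mono_mul, sumSet_succ]

lemma exists_minGen {J : Ideal (MvPolynomial (Fin n) K)} {v : Fin n → ℕ}
    (hm : mono K v ∈ J) : ∃ m, IsMinGen J m ∧ m ≤ v := by
  classical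
  obtain ⟨N, hN⟩ : ∃ N, (∑ i, v i) ≤ N := ⟨_, le_refl _⟩
  induction N generalizing v with
  | zero =>
      refine ⟨v, ⟨hm, fun β hβ hle => ?_⟩, le_refl _⟩
      rw [Pi.le_def] at hle
      funext i
      have h1 : β i ≤ v i := hle i
      have h2 : v i = 0 := by
        have := Finset.single_le_sum (f := v) (fun j _ => Nat.zero_le _) (Finset.mem_univ i)
        omega
      omega
  | succ N ih =>
      by_cases h : ∀ β : Fin n → ℕ, mono K β ∈ J → β ≤ v → β = v
      · exact ⟨v, ⟨hm, h⟩, le_refl _⟩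
      · push_neg at h
        obtain ⟨β, hβJ, hβle, hβne⟩ := h
        rw [Pi.le_def] at hβle
        have hlt : (∑ i, β i) < ∑ i, v i := by
          have hne : ∃ i, β i ≠ v i := by
            by_contra hc
            push_neg at hc
            exact hβne (funext hc)
          obtain ⟨i, hi⟩ := hne
          exact Finset.sum_lt_sum (fun j _ => hβle j)
            ⟨i, Finset.mem_univ i, lt_of_le_of_ne (hβle i) hi⟩
        obtain ⟨m, hmin, hle⟩ := ih hβJ (by omega)
        exact ⟨m, hmin, le_trans hle (Pi.le_def.2 hβle)⟩

end Infra

section Theta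
variable {K : Type*} [Field K] {n : ℕ} {I : Ideal (MvPolynomial (Fin n) K)} {d : Fin n → ℕ}

lemma minGen_le_d (hI : MPrimaryWithCorners I d) {γ : Fin n → ℕ}
    (h : IsMinGen I γ) (i : Fin n) : γ i ≤ d i := by
  by_contra hc
  push_neg at hc
  have hle : Pi.single i (d i) ≤ γ := by
    rw [Pi.le_def]
    intro j
    rcases eq_or_ne j i with rfl | hne
    · simpa using le_of_lt hc
    · simp [Pi.single_eq_of_ne hne]
  have heq := h.2 _ (hI.2.2.2 i).1 hle
  have : γ i = d i := by rw [← heq]; simp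
  omega

/-- Every monomial of `I^M` has weighted degree at least `(M-1)·D`. -/
lemma theta_aux (hI : MPrimaryWithCorners I d) (hgood : IsGood I d)
    {M : ℕ} {u : Fin n → ℕ} (hM : 1 ≤ M) (hu : mono K u ∈ I ^ M) :
    (M - 1) * (∏ i, d i) ≤ ∑ i, u i * ((∏ i, d i) / d i) := by
  set D := ∏ i, d i with hD
  obtain ⟨m, hmin, hle⟩ := exists_minGen hu
  rw [Pi.le_def] at hle
  obtain ⟨b, hbox, hsum⟩ := hgood M hM m hmin
  calc (M - 1) * D = (∑ i, b i) * D := by rw [hsum]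
    _ = ∑ i, b i * D := by rw [Finset.sum_mul]
    _ ≤ ∑ i, u i * (D / d i) := by
        apply Finset.sum_le_sum
        intro i _
        have hdvd : d i ∣ D := Finset.dvd_prod_of_mem d (Finset.mem_univ i)
        have h1 : b i * D = (b i * d i) * (D / d i) := by
          rw [mul_assoc, Nat.mul_div_cancel' hdvd]
        rw [h1]
        exact Nat.mul_le_mul_right _ (le_trans (hbox i).1 (hle i))

/-- Every monomial of `I^M` has weighted degree at least `M·D`. -/
lemma theta (hI : MPrimaryWithCorners I d) (hgood : IsGood I d)
    {M : ℕ} {u : Fin n → ℕ} (hu : mono K u ∈ I ^ M) :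
    M * (∏ i, d i) ≤ ∑ i, u i * ((∏ i, d i) / d i) := by
  set D := ∏ i, d i with hD
  have hD0 : 0 < D := Finset.prod_pos fun i _ => hI.2.2.1 i
  rcases Nat.eq_zero_or_pos M with rfl | hM
  · simp
  set S := ∑ i, u i * (D / d i) with hS
  by_contra hc
  push_neg at hc
  set N := D + 1 with hN
  have hpow : mono K (N • u) ∈ I ^ (M * N) := by
    have h := Ideal.pow_mem_pow hu N
    rwa [mono_pow, ← pow_mul] at h
  have hNM : 1 ≤ M * N := Nat.mul_pos hM (by omega)
  have haux := theta_aux hI hgood hNM hpow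
  have hslin : (∑ i, (N • u) i * (D / d i)) = N * S := by
    rw [hS, Finset.mul_sum]
    apply Finset.sum_congr rfl
    intro i _
    simp [Pi.smul_apply, smul_eq_mul, mul_assoc]
  rw [hslin] at haux
  have h1 : M * N * D - D ≤ N * S := by
    have e : M * N * D - D = (M * N - 1) * D := by rw [Nat.sub_mul, one_mul]
    rw [e]
    exact haux
  have h2 : N * S + N ≤ M * N * D := by
    have h' : N * (S + 1) ≤ N * (M * D) := Nat.mul_le_mul_left N hc
    calc N * S + N = N * (S + 1) := by ring
      _ ≤ N * (M * D) := h'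
      _ = M * N * D := by ring
  have h3 : N ≤ M * N * D := by
    calc N = 1 * N * 1 := by ring
      _ ≤ M * N * D := by
          exact Nat.mul_le_mul (Nat.mul_le_mul hM (le_refl N)) (by omega)
  omega
end Theta

section MCsec
variable {K : Type*} [Field K] {n : ℕ} {I : Ideal (MvPolynomial (Fin n) K)} {d : Fin n → ℕ}

/-- Key lemma: if `x^v ∈ I^l` and `v_z ≥ (l-1)d_z`, then some minimal generator of `I^l`
in the extreme box `B_{(l-1)e_z}` divides `x^v`. -/
lemma MC (hI : MPrimaryWithCorners I d) (hgood : IsGood I d) (z : Fin n)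
    {l : ℕ} (hl : 1 ≤ l) :
    ∀ (N : ℕ) (v : Fin n → ℕ), (∑ i, v i) ≤ N → mono K v ∈ I ^ l →
      (l - 1) * d z ≤ v z →
      ∃ p, IsMinGen (I ^ l) p ∧ (∀ i, p i ≤ v i) ∧ (l - 1) * d z ≤ p z ∧
        ∀ i, i ≠ z → p i ≤ d i := by
  intro N
  induction N using Nat.strong_induction_on with
  | _ N ih =>
  intro v hNv hv hvz
  obtain ⟨m, hmin, hmle'⟩ := exists_minGen hv
  have hmle : ∀ i, m i ≤ v i := fun i => hmle' i
  by_cases hP : ∃ v' : Fin n → ℕ, (∀ i, v' i ≤ v i) ∧ v' ≠ v ∧ mono K v' ∈ I ^ l ∧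
      (l - 1) * d z ≤ v' z
  · obtain ⟨v', h1, h2, h3, h4⟩ := hP
    have hlt : (∑ i, v' i) < ∑ i, v i := by
      have hne : ∃ i, v' i ≠ v i := by
        by_contra hcc
        push_neg at hcc
        exact h2 (funext hcc)
      obtain ⟨i, hi⟩ := hne
      exact Finset.sum_lt_sum (fun j _ => h1 j)
        ⟨i, Finset.mem_univ i, lt_of_le_of_ne (h1 i) hi⟩
    obtain ⟨p, pmin, ple, pz, psm⟩ := ih (∑ i, v' i) (by omega) v' (le_refl _) h3 h4
    exact ⟨p, pmin, fun i => le_trans (ple i) (h1 i), pz, psm⟩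
  · push_neg at hP
    have hfull : ∀ i, i ≠ z → m i = v i := by
      intro i hiz
      by_contra hne
      have hmi : m i < v i := lt_of_le_of_ne (hmle i) hne
      set v' : Fin n → ℕ := fun k => if k = i then v i - 1 else v k with hv'
      have hv'le : ∀ k, v' k ≤ v k := by
        intro k
        rcases eq_or_ne k i with rfl | hk
        · simp [hv']
        · simp [hv', hk]
      have hv'ne : v' ≠ v := by
        intro he
        have h := congrFun he i
        simp [hv'] at h
        omega
      have hv'mem : mono K v' ∈ I ^ l := by
        apply mono_mem_of_le hmin.1
        intro k
        rcases eq_or_ne k i with rfl | hk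
        · simp [hv']; omega
        · simp [hv', hk]; exact hmle k
      have hcon := hP v' hv'le hv'ne hv'mem
      have hv'z : v' z = v z := by simp [hv', Ne.symm hiz]
      omega
    have hswap : ∀ j, j ≠ z → d j ≤ m j →
        (∃ p, IsMinGen (I ^ l) p ∧ (∀ i, p i ≤ v i) ∧ (l - 1) * d z ≤ p z ∧
          ∀ i, i ≠ z → p i ≤ d i) ∨
        (v = fun i => if i = z then (l - 1) * d z else if i = j then d j else 0) := by
      intro j hjz hjd
      set z' : Fin n → ℕ := fun i => if i = z then (l - 1) * d z else if i = j then d j else 0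
        with hz'
      have hz'mem : mono K z' ∈ I ^ l := by
        have h1 : mono K (Pi.single z (d z)) ^ (l - 1) ∈ I ^ (l - 1) :=
          Ideal.pow_mem_pow (hI.2.2.2 z).1 _
        have h2 : mono K (Pi.single j (d j)) ∈ I := (hI.2.2.2 j).1
        have he : mono K z' =
            mono K (Pi.single z (d z)) ^ (l - 1) * mono K (Pi.single j (d j)) := by
          rw [mono_pow, mono_mul]
          congr 1
          funext i
          rcases eq_or_ne i z with rfl | hiz2
          · simp [hz', Pi.single_eq_of_ne (Ne.symm hjz), smul_eq_mul]
          · rcases eq_or_ne i j with rfl | hij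
            · simp [hz', hiz2, Pi.single_eq_of_ne hiz2]
            · simp [hz', hiz2, hij, Pi.single_eq_of_ne hiz2, Pi.single_eq_of_ne hij]
        rw [he]
        have hmm := Ideal.mul_mem_mul h1 h2
        rwa [← pow_succ, Nat.sub_add_cancel hl] at hmm
      have hz'le : ∀ i, z' i ≤ v i := by
        intro i
        rcases eq_or_ne i z with rfl | hiz2
        · simpa [hz'] using hvz
        · rcases eq_or_ne i j with rfl | hij
          · simp only [hz', if_neg hiz2, if_pos rfl]
            rw [← hfull i hiz2]
            exact hjd
          · simp [hz', hiz2, hij]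
      by_cases hz'v : z' = v
      · right; exact hz'v.symm
      · left
        exfalso
        have hcon := hP z' hz'le hz'v hz'mem
        simp only [hz', if_pos rfl] at hcon
        omega
    by_cases hmz : (l - 1) * d z ≤ m z
    · by_cases hsm : ∀ i, i ≠ z → m i ≤ d i
      · exact ⟨m, hmin, hmle, hmz, hsm⟩
      · push_neg at hsm
        obtain ⟨j, hjz, hjd⟩ := hsm
        rcases hswap j hjz (le_of_lt hjd) with h | hveq
        · exact h
        · exfalso
          have hvj : v j = d j := by rw [hveq]; simp [hjz]
          have := hmle j
          omega
    · push_neg at hmz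
      obtain ⟨b, hbox, hbsum⟩ := hgood l hl m hmin
      have hdz : 0 < d z := hI.2.2.1 z
      have hbz : b z < l - 1 := by
        have h1 := (hbox z).1
        have h2 : b z * d z < (l - 1) * d z := lt_of_le_of_lt h1 hmz
        exact lt_of_mul_lt_mul_right h2 (Nat.zero_le _)
      have hex : ∃ j, j ≠ z ∧ 1 ≤ b j := by
        by_contra hcc
        push_neg at hcc
        have hbs : (∑ i, b i) = b z := by
          apply Finset.sum_eq_single_of_mem z (Finset.mem_univ z)
          intro i _ hi
          have := hcc i hi
          omega
        omega
      obtain ⟨j, hjz, hbj⟩ := hex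
      have hjd : d j ≤ m j := by
        have h1 : 1 * d j ≤ b j * d j := Nat.mul_le_mul_right _ hbj
        have h2 := (hbox j).1
        omega
      rcases hswap j hjz hjd with h | hveq
      · exact h
      · exfalso
        have hD0 : 0 < ∏ i, d i := Finset.prod_pos fun i _ => hI.2.2.1 i
        have hth := theta hI hgood (M := l) hmin.1
        have hdvdz : d z ∣ ∏ i, d i := Finset.dvd_prod_of_mem d (Finset.mem_univ z)
        have hdvdj : d j ∣ ∏ i, d i := Finset.dvd_prod_of_mem d (Finset.mem_univ j)
        have hSm : (∑ i, m i * ((∏ i, d i) / d i))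
            = m z * ((∏ i, d i) / d z) + ∏ i, d i := by
          rw [← Finset.add_sum_erase _ _ (Finset.mem_univ z)]
          congr 1
          have hjmem : j ∈ Finset.univ.erase z := Finset.mem_erase.2 ⟨hjz, Finset.mem_univ j⟩
          rw [Finset.sum_eq_single_of_mem j hjmem]
          · have hmj : m j = d j := by
              rw [hfull j hjz, hveq]
              simp [hjz]
            rw [hmj, Nat.mul_div_cancel' hdvdj]
          · intro i hi hij
            have hiz : i ≠ z := (Finset.mem_erase.1 hi).1
            have hmi : m i = 0 := by
              rw [hfull i hiz, hveq]
              simp [hiz, hij]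
            rw [hmi, zero_mul]
        rw [hSm] at hth
        have he1 : (l - 1) * (∏ i, d i) + (∏ i, d i) = l * ∏ i, d i := by
          have e : l - 1 + 1 = l := Nat.sub_add_cancel hl
          calc (l - 1) * (∏ i, d i) + (∏ i, d i) = ((l - 1) + 1) * ∏ i, d i := by ring
            _ = l * ∏ i, d i := by rw [e]
        rw [← he1] at hth
        have he2 : (l - 1) * (∏ i, d i) ≤ m z * ((∏ i, d i) / d z) :=
          Nat.le_of_add_le_add_right hth
        have he3 : ((l - 1) * d z) * ((∏ i, d i) / d z) ≤ m z * ((∏ i, d i) / d z) := by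
          have e : ((l - 1) * d z) * ((∏ i, d i) / d z) = (l - 1) * ∏ i, d i := by
            rw [mul_assoc, Nat.mul_div_cancel' hdvdz]
          omega
        have hq : 0 < (∏ i, d i) / d z := Nat.div_pos (Nat.le_of_dvd hD0 hdvdz) hdz
        have hfin := Nat.le_of_mul_le_mul_right he3 hq
        omega
end MCsec

section Main
variable {K : Type*} [Field K] {n : ℕ} {I : Ideal (MvPolynomial (Fin n) K)} {d : Fin n → ℕ}

lemma exists_exact_decomp (hI : MPrimaryWithCorners I d) {l : ℕ} {α : Fin n → ℕ}
    (hα : IsMinGen (I ^ l) α) :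
    ∃ γ : Fin l → Fin n → ℕ, (∀ k, IsMinGen I (γ k)) ∧ (∑ k, γ k) = α := by
  obtain ⟨A, hA⟩ := hI.1
  have hmem : mono K α ∈ Ideal.span (mono K '' sumSet A l) := by
    rw [← pow_span_mono, ← hA]
    exact hα.1
  have hσ : Finsupp.equivFunOnFinite.symm α ∈ (mono K α).support := by
    rw [support_mono]
    exact Finset.mem_singleton_self _
  obtain ⟨s, hsS, hsle⟩ := mem_span_mono_support hmem _ hσ
  obtain ⟨f, hf, rfl⟩ := hsS
  have hfI : ∀ k, mono K (f k) ∈ I := by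
    intro k
    rw [hA]
    exact Ideal.subset_span ⟨f k, hf k, rfl⟩
  choose γ hγmin hγle using fun k => exists_minGen (hfI k)
  have hsum_le : ∀ i, (∑ k, γ k) i ≤ α i := by
    intro i
    have h1 : (∑ k, γ k) i = ∑ k, γ k i := by rw [Finset.sum_apply]
    have h2 : (∑ k, f k) i = ∑ k, f k i := by rw [Finset.sum_apply]
    have h3 : ∑ k, γ k i ≤ ∑ k, f k i :=
      Finset.sum_le_sum fun k _ => (Pi.le_def.1 (hγle k)) i
    have h4 : (∑ k, f k) i ≤ α i := hsle i
    rw [h2] at h4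
    omega
  have hmem2 : mono K (∑ k, γ k) ∈ I ^ l := prod_mono_mem_pow γ fun k => (hγmin k).1
  exact ⟨γ, hγmin, hα.2 _ hmem2 (Pi.le_def.2 hsum_le)⟩

end Main
/-- Lemma 7.1: for a good ideal `I` and every `t ≥ 0`,
`I_{t+1,0,…,0} = (I_{t,0,…,0} · I) : ⟨μ_1⟩`. -/
theorem boxIdeal_succ_eq {K : Type*} [Field K] {n : ℕ}
    (I : Ideal (MvPolynomial (Fin n) K)) (d : Fin n → ℕ)
    (hI : MPrimaryWithCorners I d) (hgood : IsGood I d) (hn : 0 < n) (t : ℕ) :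
    boxIdeal I d (Pi.single (⟨0, hn⟩ : Fin n) (t + 1)) =
      (boxIdeal I d (Pi.single (⟨0, hn⟩ : Fin n) t) * I).colon
        (Ideal.span {mono K (Pi.single (⟨0, hn⟩ : Fin n) (d ⟨0, hn⟩))}) := by
  classical
  set z : Fin n := ⟨0, hn⟩ with hzdef
  have hdz : 0 < d z := hI.2.2.1 z
  have hsum : ∀ c : ℕ, (∑ i, (Pi.single z c : Fin n → ℕ) i) = c := by
    intro c
    simp [Finset.sum_pi_single']
  have hpow1 : (∑ i, (Pi.single z (t + 1) : Fin n → ℕ) i) + 1 = t + 2 := by rw [hsum]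
  have hpow0 : (∑ i, (Pi.single z t : Fin n → ℕ) i) + 1 = t + 1 := by rw [hsum]
  apply le_antisymm
  · rw [boxIdeal]
    apply Ideal.span_le.2
    rintro x ⟨α, ⟨hbox, hminpre⟩, rfl⟩
    have hmin : IsMinGen (I ^ (t + 2)) α := by rwa [hpow1] at hminpre
    rw [SetLike.mem_coe, Ideal.mem_colon_span_singleton]
    obtain ⟨γ, hγmin, hγsum⟩ := exists_exact_decomp hI hmin
    have hγd : ∀ k i, γ k i ≤ d i := fun k i => minGen_le_d hI (hγmin k) i
    set u : Fin n → ℕ := ∑ k : Fin (t + 1), γ k.succ with hu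
    have hαdec : α = γ 0 + u := by rw [hu, ← hγsum, Fin.sum_univ_succ]
    have hui : ∀ i, u i = ∑ k : Fin (t + 1), γ k.succ i := fun i => by
      rw [hu, Finset.sum_apply]
    have hαi : ∀ i, α i = γ 0 i + u i := fun i => by rw [hαdec]; rfl
    have hαz : (t + 1) * d z ≤ α z := by
      have h := (hbox z).1
      simpa using h
    have huzlow : t * d z ≤ u z := by
      have h1 := hγd 0 z
      have h2 := hαi z
      have h3 : (t + 1) * d z = t * d z + d z := by ring
      omega
    have huzhigh : u z ≤ (t + 1) * d z := by
      rw [hui z]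
      calc ∑ k : Fin (t + 1), γ k.succ z ≤ ∑ _k : Fin (t + 1), d z :=
            Finset.sum_le_sum fun k _ => hγd _ z
        _ = (t + 1) * d z := by simp [Finset.sum_const, mul_comm]
    have humem : mono K u ∈ I ^ (t + 1) := prod_mono_mem_pow _ fun k => (hγmin _).1
    have humin : IsMinGen (I ^ (t + 1)) u := by
      refine ⟨humem, fun β hβ hβle => ?_⟩
      have hmem2 : mono K (γ 0 + β) ∈ I ^ (t + 2) := by
        rw [← mono_mul, pow_succ']
        exact Ideal.mul_mem_mul (hγmin 0).1 hβ
      have hle2 : γ 0 + β ≤ α := by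
        rw [Pi.le_def]
        intro i
        have h1 := (Pi.le_def.1 hβle) i
        have h2 := hαi i
        simp only [Pi.add_apply]
        omega
      have heq := hmin.2 _ hmem2 hle2
      have heq2 : γ 0 + β = γ 0 + u := by rw [heq, hαdec]
      exact add_left_cancel heq2
    have hubox : InBox d (Pi.single z t) u := by
      intro i
      rcases eq_or_ne i z with rfl | hne
      · constructor
        · simpa using huzlow
        · simpa using huzhigh
      · have h1 := (hbox i).2
        have h2 : α i ≤ d i := by simpa [Pi.single_eq_of_ne hne] using h1
        have h3 := hαi i
        constructor
        · simp [Pi.single_eq_of_ne hne]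
        · simp only [Pi.single_eq_of_ne hne, zero_mul, zero_add, one_mul]
          omega
    have hgen : mono K (u - fun i => (Pi.single z t : Fin n → ℕ) i * d i)
        ∈ boxIdeal I d (Pi.single z t) := by
      rw [boxIdeal]
      apply Ideal.subset_span
      refine ⟨u, ⟨hubox, ?_⟩, rfl⟩
      rwa [hpow0]
    have hkey : mono K (α - fun i => (Pi.single z (t + 1) : Fin n → ℕ) i * d i)
          * mono K (Pi.single z (d z))
        = mono K (u - fun i => (Pi.single z t : Fin n → ℕ) i * d i) * mono K (γ 0) := by
      rw [mono_mul, mono_mul]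
      congr 1
      funext i
      simp only [Pi.add_apply, Pi.sub_apply]
      rcases eq_or_ne i z with rfl | hne
      · have h2 := huzlow
        have h3 := hαi z
        have h4 := hαz
        have h5 : (t + 1) * d z = t * d z + d z := by ring
        simp only [Pi.single_eq_same]
        omega
      · have h3 := hαi i
        simp only [Pi.single_eq_of_ne hne, zero_mul]
        omega
    rw [hkey]
    exact Ideal.mul_mem_mul hgen (hγmin 0).1
  · intro p hp
    rw [Ideal.mem_colon_span_singleton] at hp
    obtain ⟨A, hA⟩ := hI.1
    have hbox_span : boxIdeal I d (Pi.single z t)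
        = Ideal.span (mono K '' ((fun α => α - fun i => (Pi.single z t : Fin n → ℕ) i * d i) ''
          {α | InBox d (Pi.single z t) α ∧
            IsMinGen (I ^ (∑ i, (Pi.single z t : Fin n → ℕ) i + 1)) α})) := by
      rw [boxIdeal, Set.image_image]
    rw [hbox_span, hA, span_mono_mul] at hp
    have hkey : ∀ σ ∈ p.support, mono K (⇑σ) ∈ boxIdeal I d (Pi.single z (t + 1)) := by
      intro σ hσ
      have hσ2 : σ + Finsupp.equivFunOnFinite.symm (Pi.single z (d z)) ∈
          (p * mono K (Pi.single z (d z))).support := by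
        rw [MvPolynomial.mem_support_iff, mono, coeff_mul_monomial, mul_one]
        exact MvPolynomial.mem_support_iff.1 hσ
      obtain ⟨b, hbmem, hble⟩ := mem_span_mono_support hp _ hσ2
      obtain ⟨x, hxX, a, haA, rfl⟩ := hbmem
      obtain ⟨β, ⟨hβbox, hβminpre⟩, rfl⟩ := hxX
      rw [← hA] at hβminpre
      have hβmin : IsMinGen (I ^ (t + 1)) β := by rwa [hpow0] at hβminpre
      have hβz : t * d z ≤ β z := by
        have h := (hβbox z).1
        simpa using h
      set v : Fin n → ℕ := fun i => σ i + (Pi.single z (t + 1) : Fin n → ℕ) i * d i with hv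
      have hba : ∀ i, β i + a i ≤ v i := by
        intro i
        have h : β i - (Pi.single z t : Fin n → ℕ) i * d i + a i
            ≤ σ i + (Pi.single z (d z) : Fin n → ℕ) i := hble i
        rcases eq_or_ne i z with rfl | hne
        · simp only [Pi.single_eq_same] at h
          simp only [hv, Pi.single_eq_same]
          have h5 : (t + 1) * d z = t * d z + d z := by ring
          have h6 := hβz
          omega
        · simp only [Pi.single_eq_of_ne hne, zero_mul] at h
          simp only [hv, Pi.single_eq_of_ne hne, zero_mul]
          omega
      have hvmem : mono K v ∈ I ^ (t + 2) := by
        have hamem : mono K a ∈ I := by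
          rw [hA]
          exact Ideal.subset_span ⟨a, haA, rfl⟩
        have hmem2 : mono K (β + a) ∈ I ^ (t + 2) := by
          rw [← mono_mul, pow_succ]
          exact Ideal.mul_mem_mul hβmin.1 hamem
        exact mono_mem_of_le hmem2 hba
      have hvz : (t + 2 - 1) * d z ≤ v z := by
        have he : t + 2 - 1 = t + 1 := rfl
        rw [he]
        simp only [hv, Pi.single_eq_same]
        omega
      obtain ⟨q, hqmin, hqle, hqz, hqsm⟩ :=
        MC hI hgood z (l := t + 2) (by omega) (∑ i, v i) v (le_refl _) hvmem hvz
      obtain ⟨c, hcbox, hcsum⟩ := hgood (t + 2) (by omega) q hqmin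
      have hqzhigh : q z ≤ (t + 2) * d z := by
        have h1 := (hcbox z).2
        have h2 : c z ≤ t + 1 := by
          have := Finset.single_le_sum (f := c) (fun j _ => Nat.zero_le _) (Finset.mem_univ z)
          omega
        have h3 : (c z + 1) * d z ≤ (t + 2) * d z := Nat.mul_le_mul_right _ (by omega)
        omega
      have hqbox : InBox d (Pi.single z (t + 1)) q := by
        intro i
        rcases eq_or_ne i z with rfl | hne
        · constructor
          · simpa using hqz
          · simpa using hqzhigh
        · constructor
          · simp [Pi.single_eq_of_ne hne]
          · simp only [Pi.single_eq_of_ne hne, zero_mul, zero_add, one_mul]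
            exact hqsm i hne
      have hgen : mono K (q - fun i => (Pi.single z (t + 1) : Fin n → ℕ) i * d i)
          ∈ boxIdeal I d (Pi.single z (t + 1)) := by
        rw [boxIdeal]
        apply Ideal.subset_span
        refine ⟨q, ⟨hqbox, ?_⟩, rfl⟩
        rwa [hpow1]
      apply mono_mem_of_le hgen
      intro i
      rcases eq_or_ne i z with rfl | hne
      · have h1 := hqle z
        simp only [hv, Pi.single_eq_same] at h1
        simp only [Pi.sub_apply, Pi.single_eq_same]
        omega
      · have h1 := hqle i
        simp only [hv, Pi.single_eq_of_ne hne, zero_mul, add_zero] at h1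
        simp only [Pi.sub_apply, Pi.single_eq_of_ne hne, zero_mul]
        omega
    rw [← support_sum_monomial_coeff p]
    apply Ideal.sum_mem
    intro σ hσ
    have h1 : (monomial σ) (coeff σ p) = C (coeff σ p) * mono K ⇑σ := by
      rw [mono, Finsupp.equivFunOnFinite_symm_coe, C_mul_monomial, mul_one]
    rw [h1]
    exact Ideal.mul_mem_left _ _ (hkey σ hσ)
end GasanovaRR
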